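/- Let 1/2 ≤ H₁ < H₂ < 1 and T > 0. Define φ(s,u) = (min(s,u))^{1-2H₁} · u^{2H₁-1} · |s-u|^{2H₂-2H₁-1}. Then sup_{u ∈ [0,T]} ∫₀ᵀ φ(s,u) ds ≤ C·T^{2H₂-2H₁} for some constant C depending only on H₁, H₂; in particular φ(·,u) ∈ L¹[0,T] for every u, with uniformly bounded L¹ norm. -/

import Mathlib

open MeasureTheory intervalIntegral Set

lemma aux_case_pos (a b : ℝ) (ha : -1 < a) (ha0 : a ≤ 0) (hb : -1 < b) (hb0 : b < 0)
    (T : ℝ) (hT : 0 < T) (u : ℝ) (hu0 : 0 < u) (huT : u ≤ T) :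
    IntervalIntegrable (fun s => (min s u) ^ a * u ^ (-a) * |s - u| ^ b) volume 0 T ∧
    (∫ s in (0:ℝ)..T, (min s u) ^ a * u ^ (-a) * |s - u| ^ b)
      ≤ (2/(a+1) + 2/(b+1) + 1/(b+1)) * T ^ (b+1) := by
  have hu2 : 0 < u/2 := half_pos hu0
  set f : ℝ → ℝ := fun s => (min s u) ^ a * u ^ (-a) * |s - u| ^ b with hf
  -- piece 1 : 0 .. u/2
  have hcont1 : ContinuousOn (fun s : ℝ => u ^ (-a) * (u - s) ^ b) (Icc 0 (u/2)) := by
    apply continuousOn_const.mul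
    apply (continuousOn_const.sub continuousOn_id).rpow_const
    intro x hx
    exact Or.inl (by simp only [Pi.sub_apply, id]; nlinarith [hx.2])
  have hg1 : IntervalIntegrable (fun s => s ^ a * (u ^ (-a) * (u - s) ^ b)) volume 0 (u/2) := by
    apply (intervalIntegrable_rpow' ha).mul_continuousOn
    rwa [uIcc_of_le hu2.le]
  have heq1 : EqOn (fun s => s ^ a * (u ^ (-a) * (u - s) ^ b)) f (Ioc 0 (u/2)) := by
    intro s hs
    have h1 : min s u = s := min_eq_left (by linarith [hs.2])
    have h2 : |s - u| = u - s := by rw [abs_of_nonpos (by linarith [hs.2])]; ring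
    simp only [hf, h1, h2]; try ring
  have h1 : IntervalIntegrable f volume 0 (u/2) := by
    rw [intervalIntegrable_iff_integrableOn_Ioc_of_le hu2.le]
    exact ((intervalIntegrable_iff_integrableOn_Ioc_of_le hu2.le).mp hg1).congr_fun heq1
      measurableSet_Ioc
  -- piece 2 : u/2 .. u
  have hbase2 : IntervalIntegrable (fun s : ℝ => (u - s) ^ b) volume (u/2) u := by
    have h := (intervalIntegrable_rpow' (r := b) hb (a := 0) (b := u/2)).comp_sub_left u
    rw [sub_zero] at h
    have h2 : u - u/2 = u/2 := by ring
    rw [h2] at h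
    exact h.symm
  have hg2 : IntervalIntegrable (fun s => (u ^ (-a) * s ^ a) * (u - s) ^ b) volume (u/2) u := by
    apply hbase2.continuousOn_mul
    rw [uIcc_of_le (by linarith)]
    apply continuousOn_const.mul
    apply continuousOn_id.rpow_const
    intro x hx
    exact Or.inl (by simp only [id]; nlinarith [hx.1])
  have heq2 : EqOn (fun s => (u ^ (-a) * s ^ a) * (u - s) ^ b) f (Ioc (u/2) u) := by
    intro s hs
    have h1 : min s u = s := min_eq_left hs.2
    have h2 : |s - u| = u - s := by rw [abs_of_nonpos (by linarith [hs.2])]; ring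
    simp only [hf, h1, h2]; try ring
  have h2 : IntervalIntegrable f volume (u/2) u := by
    rw [intervalIntegrable_iff_integrableOn_Ioc_of_le (by linarith)]
    exact ((intervalIntegrable_iff_integrableOn_Ioc_of_le (by linarith)).mp hg2).congr_fun heq2
      measurableSet_Ioc
  -- piece 3 : u .. T
  have hbase3 : IntervalIntegrable (fun s : ℝ => (s - u) ^ b) volume u T := by
    have h := (intervalIntegrable_rpow' (r := b) hb (a := 0) (b := T - u)).comp_sub_right u
    rwa [zero_add, sub_add_cancel] at h
  have hg3 : IntervalIntegrable (fun s => (u ^ a * u ^ (-a)) * (s - u) ^ b) volume u T :=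
    hbase3.const_mul _
  have heq3 : EqOn (fun s => (u ^ a * u ^ (-a)) * (s - u) ^ b) f (Ioc u T) := by
    intro s hs
    have h1 : min s u = u := min_eq_right hs.1.le
    have h2 : |s - u| = s - u := abs_of_nonneg (by linarith [hs.1])
    simp only [hf, h1, h2]; try ring
  have h3 : IntervalIntegrable f volume u T := by
    rw [intervalIntegrable_iff_integrableOn_Ioc_of_le huT]
    exact ((intervalIntegrable_iff_integrableOn_Ioc_of_le huT).mp hg3).congr_fun heq3
      measurableSet_Ioc
  refine ⟨(h1.trans h2).trans h3, ?_⟩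
  have ha1 : (0:ℝ) < a + 1 := by linarith
  have hb1 : (0:ℝ) < b + 1 := by linarith
  have hTb : (u/2) ^ (b+1) ≤ T ^ (b+1) :=
    Real.rpow_le_rpow hu2.le (by linarith) hb1.le
  have hkey : u ^ (-a) * (u/2) ^ a ≤ 2 := by
    rw [Real.div_rpow hu0.le (by norm_num : (0:ℝ) ≤ 2), mul_div_assoc',
      ← Real.rpow_add hu0, neg_add_cancel, Real.rpow_zero]
    calc (1:ℝ) / 2 ^ a = (2:ℝ) ^ (-a) := by
          rw [Real.rpow_neg (by norm_num), one_div]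
      _ ≤ (2:ℝ) ^ (1:ℝ) :=
          Real.rpow_le_rpow_of_exponent_le one_le_two (by linarith)
      _ = 2 := Real.rpow_one 2
  have hprod : u ^ (-a) * (u/2) ^ a * (u/2) ^ (b+1) ≤ 2 * T ^ (b+1) :=
    mul_le_mul hkey hTb (Real.rpow_nonneg hu2.le _)
      (by norm_num)
  have hsplit : (∫ s in (0:ℝ)..T, f s) =
      (∫ s in (0:ℝ)..(u/2), f s) + (∫ s in (u/2)..u, f s) + (∫ s in u..T, f s) := by
    rw [integral_add_adjacent_intervals h1 h2,
      integral_add_adjacent_intervals (h1.trans h2) h3]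
  have hB1 : (∫ s in (0:ℝ)..(u/2), f s) ≤ 2/(a+1) * T ^ (b+1) := by
    have e : (∫ s in (0:ℝ)..(u/2), f s)
        = ∫ s in (0:ℝ)..(u/2), s ^ a * (u ^ (-a) * (u - s) ^ b) := by
      apply intervalIntegral.integral_congr_ae
      filter_upwards with x hx
      rw [uIoc_of_le hu2.le] at hx
      exact (heq1 hx).symm
    rw [e]
    have hmono : (∫ s in (0:ℝ)..(u/2), s ^ a * (u ^ (-a) * (u - s) ^ b))
        ≤ ∫ s in (0:ℝ)..(u/2), s ^ a * (u ^ (-a) * (u/2) ^ b) := by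
      apply integral_mono_on hu2.le hg1 ((intervalIntegrable_rpow' ha).mul_const _)
      intro s hs
      refine mul_le_mul_of_nonneg_left ?_ (Real.rpow_nonneg hs.1 a)
      refine mul_le_mul_of_nonneg_left ?_ (Real.rpow_nonneg hu0.le _)
      exact Real.rpow_le_rpow_of_nonpos hu2 (by linarith [hs.2]) hb0.le
    refine hmono.trans ?_
    rw [intervalIntegral.integral_mul_const, integral_rpow (Or.inl ha),
      Real.zero_rpow (by linarith : a + 1 ≠ 0), sub_zero]
    have e2 : (u/2) ^ (a+1) / (a+1) * (u ^ (-a) * (u/2) ^ b)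
        = (u ^ (-a) * (u/2) ^ a * (u/2) ^ (b+1)) / (a+1) := by
      rw [Real.rpow_add hu2 a 1, Real.rpow_add hu2 b 1, Real.rpow_one]
      ring
    rw [e2, div_mul_eq_mul_div, div_le_div_iff_of_pos_right ha1]
    exact hprod
  have hB2 : (∫ s in (u/2)..u, f s) ≤ 2/(b+1) * T ^ (b+1) := by
    have e : (∫ s in (u/2)..u, f s)
        = ∫ s in (u/2)..u, (u ^ (-a) * s ^ a) * (u - s) ^ b := by
      apply intervalIntegral.integral_congr_ae
      filter_upwards with x hx
      rw [uIoc_of_le (by linarith)] at hx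
      exact (heq2 hx).symm
    rw [e]
    have hmono : (∫ s in (u/2)..u, (u ^ (-a) * s ^ a) * (u - s) ^ b)
        ≤ ∫ s in (u/2)..u, (u ^ (-a) * (u/2) ^ a) * (u - s) ^ b := by
      apply integral_mono_on (by linarith) hg2 (hbase2.const_mul _)
      intro s hs
      refine mul_le_mul_of_nonneg_right ?_ (Real.rpow_nonneg (by linarith [hs.2]) b)
      refine mul_le_mul_of_nonneg_left ?_ (Real.rpow_nonneg hu0.le _)
      exact Real.rpow_le_rpow_of_nonpos hu2 hs.1 ha0
    refine hmono.trans ?_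
    rw [intervalIntegral.integral_const_mul]
    have e3 : (∫ s in (u/2)..u, (u - s) ^ b) = (u/2) ^ (b+1) / (b+1) := by
      rw [show (∫ s in (u/2)..u, (u - s) ^ b)
          = ∫ x in (u - u)..(u - u/2), x ^ b from
        integral_comp_sub_left (fun x => x ^ b) u, sub_self,
        show u - u/2 = u/2 by ring, integral_rpow (Or.inl hb),
        Real.zero_rpow (by linarith : b + 1 ≠ 0), sub_zero]
    rw [e3]
    have e4 : u ^ (-a) * (u/2) ^ a * ((u/2) ^ (b+1) / (b+1))
        = (u ^ (-a) * (u/2) ^ a * (u/2) ^ (b+1)) / (b+1) := by ring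
    rw [e4, div_mul_eq_mul_div, div_le_div_iff_of_pos_right hb1]
    exact hprod
  have hB3 : (∫ s in u..T, f s) ≤ 1/(b+1) * T ^ (b+1) := by
    have e : (∫ s in u..T, f s)
        = ∫ s in u..T, (u ^ a * u ^ (-a)) * (s - u) ^ b := by
      apply intervalIntegral.integral_congr_ae
      filter_upwards with x hx
      rw [uIoc_of_le huT] at hx
      exact (heq3 hx).symm
    rw [e, intervalIntegral.integral_const_mul, ← Real.rpow_add hu0, add_neg_cancel, Real.rpow_zero,
      one_mul]
    have e5 : (∫ s in u..T, (s - u) ^ b) = (T - u) ^ (b+1) / (b+1) := by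
      rw [show (∫ s in u..T, (s - u) ^ b) = ∫ x in (u - u)..(T - u), x ^ b from
        integral_comp_sub_right (fun x => x ^ b) u, sub_self,
        integral_rpow (Or.inl hb), Real.zero_rpow (by linarith : b + 1 ≠ 0), sub_zero]
    rw [e5, div_mul_eq_mul_div, div_le_div_iff_of_pos_right hb1, one_mul]
    exact Real.rpow_le_rpow (by linarith) (by linarith) hb1.le
  have hC : (2/(a+1) + 2/(b+1) + 1/(b+1)) * T ^ (b+1)
      = 2/(a+1) * T ^ (b+1) + 2/(b+1) * T ^ (b+1) + 1/(b+1) * T ^ (b+1) := by ring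
  rw [hsplit, hC]
  exact add_le_add (add_le_add hB1 hB2) hB3

theorem stmt1 (H₁ H₂ : ℝ) (h1 : 1/2 ≤ H₁) (h12 : H₁ < H₂) (h2 : H₂ < 1) :
    ∃ C : ℝ, 0 < C ∧ ∀ T : ℝ, 0 < T → ∀ u ∈ Set.Icc (0:ℝ) T,
      IntegrableOn
        (fun s => (min s u) ^ (1 - 2*H₁) * u ^ (2*H₁ - 1) * |s - u| ^ (2*H₂ - 2*H₁ - 1))
        (Set.Icc 0 T) volume ∧
      (∫ s in (0:ℝ)..T,
          (min s u) ^ (1 - 2*H₁) * u ^ (2*H₁ - 1) * |s - u| ^ (2*H₂ - 2*H₁ - 1))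
        ≤ C * T ^ (2*H₂ - 2*H₁) := by
  have ha : -1 < 1 - 2*H₁ := by linarith
  have ha0 : 1 - 2*H₁ ≤ 0 := by linarith
  have hb : -1 < 2*H₂ - 2*H₁ - 1 := by linarith
  have hb0 : 2*H₂ - 2*H₁ - 1 < 0 := by linarith
  set a := 1 - 2*H₁ with ha_def
  set b := 2*H₂ - 2*H₁ - 1 with hb_def
  have ha1 : (0:ℝ) < a + 1 := by rw [ha_def]; linarith
  have hb1 : (0:ℝ) < b + 1 := by rw [hb_def]; linarith
  refine ⟨2/(a+1) + 2/(b+1) + 1/(b+1), ?_, ?_⟩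
  · have := div_pos two_pos ha1
    have := div_pos two_pos hb1
    have := div_pos one_pos hb1
    linarith
  · intro T hT u hu
    have hexp : (2*H₁ - 1) = -a := by rw [ha_def]; ring
    have hexp2 : (2*H₂ - 2*H₁) = b + 1 := by rw [hb_def]; ring
    rw [hexp, hexp2]
    rcases eq_or_lt_of_le hu.1 with hu0 | hu0
    · -- u = 0
      rcases lt_or_eq_of_le ha0 with haz | haz
      · -- a < 0 : the integrand is identically zero
        have hzero : ∀ s : ℝ, (min s u) ^ a * u ^ (-a) * |s - u| ^ b = 0 := by
          intro s
          rw [← hu0, Real.zero_rpow (by linarith : -a ≠ 0)]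
          ring
        constructor
        · simp only [hzero]
          exact integrableOn_zero
        · simp only [hzero, intervalIntegral.integral_const, smul_zero]
          have : (0:ℝ) < T ^ (b+1) := Real.rpow_pos_of_pos hT _
          have := div_pos two_pos ha1
          have := div_pos two_pos hb1
          have := div_pos one_pos hb1
          nlinarith
      · -- a = 0 : the integrand is |s| ^ b
        have hzero : ∀ s : ℝ, (min s u) ^ a * u ^ (-a) * |s - u| ^ b = |s| ^ b := by
          intro s
          rw [← hu0, haz, neg_zero, Real.rpow_zero, Real.rpow_zero, sub_zero]
          ring
        have hCge : 1/(b+1) ≤ 2/(a+1) + 2/(b+1) + 1/(b+1) := by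
          have := div_pos two_pos ha1
          have := div_pos two_pos hb1
          linarith
        constructor
        · simp only [hzero]
          have hsb : IntegrableOn (fun s : ℝ => s ^ b) (Icc 0 T) volume :=
            (intervalIntegrable_iff_integrableOn_Icc_of_le hT.le).mp
              (intervalIntegrable_rpow' hb)
          exact hsb.congr_fun (fun s hs => by rw [abs_of_nonneg hs.1]) measurableSet_Icc
        · simp only [hzero]
          have e : (∫ s in (0:ℝ)..T, |s| ^ b) = ∫ s in (0:ℝ)..T, s ^ b := by
            apply intervalIntegral.integral_congr_ae
            filter_upwards with x hx
            rw [uIoc_of_le hT.le] at hx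
            rw [abs_of_nonneg hx.1.le]
          rw [e, integral_rpow (Or.inl hb), Real.zero_rpow (by linarith : b + 1 ≠ 0),
            sub_zero]
          calc T ^ (b+1) / (b+1) = 1/(b+1) * T ^ (b+1) := by ring
            _ ≤ (2/(a+1) + 2/(b+1) + 1/(b+1)) * T ^ (b+1) :=
              mul_le_mul_of_nonneg_right hCge (Real.rpow_nonneg hT.le _)
    · -- u > 0
      obtain ⟨hInt, hBound⟩ := aux_case_pos a b ha ha0 hb hb0 T hT u hu0 hu.2
      exact ⟨(intervalIntegrable_iff_integrableOn_Icc_of_le hT.le).mp hInt, hBound⟩
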